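/- For any infinite cardinal κ and any infinite cardinal λ < κ, the alternating group Alt(κ) does not satisfy the weak λ⁺-compatibility condition; hence cn(Alt(κ)) ≥ κ. -/

import Mathlib

open Cardinal Equiv

universe u

/-- The alternating group on an arbitrary type `α`: the subgroup of `Equiv.Perm α`
generated by products of two transpositions, i.e. the group of permutations that are
compositions of an even number of transpositions. -/
def altGroup (α : Type*) [DecidableEq α] : Subgroup (Equiv.Perm α) :=
  Subgroup.closure {σ | ∃ τ₁ τ₂ : Equiv.Perm α, τ₁.IsSwap ∧ τ₂.IsSwap ∧ σ = τ₁ * τ₂}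

/-- A group `G` satisfies the weak `μ`-compatibility condition if for any finite group `F`
and any family of isomorphisms `f i : F ≃* F i` (`i < μ`) onto finite subgroups of `G`,
there are indices `i < j < μ` and a homomorphism `φ` from the subgroup generated by
`F i ∪ F j` to `F` such that `φ ∘ f i = φ ∘ f j = id`. -/
def WeakCompat (G : Type u) [Group G] (μ : Cardinal.{u}) : Prop :=
  ∀ (F : Type) (_ : Group F) (_ : Finite F)
    (Fs : ∀ o : Ordinal.{u}, o < μ.ord → Subgroup G)
    (f : ∀ o ho, F ≃* Fs o ho),
    ∃ (i j : Ordinal.{u}) (hi : i < μ.ord) (hj : j < μ.ord), i < j ∧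
      ∃ φ : (Fs i hi ⊔ Fs j hj : Subgroup G) →* F,
        (∀ x, φ (Subgroup.inclusion le_sup_left (f i hi x)) = x) ∧
        (∀ x, φ (Subgroup.inclusion le_sup_right (f j hj x)) = x)

/-- The weak compatibility number of `G`: the smallest infinite cardinal `κ` such that `G`
satisfies the weak `κ⁺`-compatibility condition. -/
noncomputable def cn (G : Type u) [Group G] : Cardinal.{u} :=
  sInf {κ | ℵ₀ ≤ κ ∧ WeakCompat G (Order.succ κ)}

section PermLemmas
variable {β : Type*} [DecidableEq β] {x y a : β}

private lemma cyc_x (hax : a ≠ x) (hay : a ≠ y) : (swap x y * swap x a) x = a := by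
  simp [Perm.mul_apply, swap_apply_left, swap_apply_of_ne_of_ne hax hay]

private lemma cyc_a (hxy : x ≠ y) : (swap x y * swap x a) a = y := by
  simp [Perm.mul_apply, swap_apply_right, swap_apply_left]

private lemma cyc_y (hxy : x ≠ y) (hay : a ≠ y) : (swap x y * swap x a) y = x := by
  simp [Perm.mul_apply, swap_apply_right, swap_apply_of_ne_of_ne (Ne.symm hxy) (fun h => hay h.symm)]

private lemma cyc_other {z : β} (hzx : z ≠ x) (hzy : z ≠ y) (hza : z ≠ a) :
    (swap x y * swap x a) z = z := by
  simp [Perm.mul_apply, swap_apply_of_ne_of_ne hzx hza, swap_apply_of_ne_of_ne hzx hzy]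

private lemma cyc_pow_three (hxy : x ≠ y) (hax : a ≠ x) (hay : a ≠ y) :
    (swap x y * swap x a) ^ 3 = 1 := by
  ext z
  have h3 : ((swap x y * swap x a) ^ 3) z
      = (swap x y * swap x a) ((swap x y * swap x a) ((swap x y * swap x a) z)) := by
    rw [pow_succ, pow_succ, pow_one]; rfl
  rw [h3, Perm.one_apply]
  rcases eq_or_ne z x with rfl | hzx
  · rw [cyc_x hax hay, cyc_a hxy, cyc_y hxy hay]
  rcases eq_or_ne z y with rfl | hzy
  · rw [cyc_y hxy hay, cyc_x hax hay, cyc_a hxy]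
  rcases eq_or_ne z a with rfl | hza
  · rw [cyc_a hxy, cyc_y hxy hay, cyc_x hax hay]
  · rw [cyc_other hzx hzy hza, cyc_other hzx hzy hza, cyc_other hzx hzy hza]

private lemma cyc_ne_one (hxy : x ≠ y) (hax : a ≠ x) (hay : a ≠ y) :
    (swap x y * swap x a) ≠ 1 := by
  intro h
  have := cyc_x (x := x) (y := y) hax hay
  rw [h, Perm.one_apply] at this
  exact hax this.symm

private lemma cyc_sq_ne_one (hxy : x ≠ y) (hax : a ≠ x) (hay : a ≠ y) :
    (swap x y * swap x a) ^ 2 ≠ 1 := by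
  intro h
  have h2 : ((swap x y * swap x a) ^ 2) x = (swap x y * swap x a) ((swap x y * swap x a) x) := by
    rw [pow_two]; rfl
  rw [h, Perm.one_apply, cyc_x hax hay, cyc_a hxy] at h2
  exact hxy h2

private lemma cyc_mul_sq (hxy : x ≠ y) (hax : a ≠ x) (hay : a ≠ y) {b : β}
    (hbx : b ≠ x) (hby : b ≠ y) (hab : a ≠ b) :
    ((swap x y * swap x a) * (swap x y * swap x b)) ^ 2 = 1 := by
  have hba : b ≠ a := hab.symm
  ext z
  have h2 : (((swap x y * swap x a) * (swap x y * swap x b)) ^ 2) z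
      = (swap x y * swap x a) ((swap x y * swap x b)
          ((swap x y * swap x a) ((swap x y * swap x b) z))) := by
    rw [pow_two]; rfl
  rw [h2, Perm.one_apply]
  rcases eq_or_ne z x with rfl | hzx
  · rw [cyc_x hbx hby, cyc_other hbx hby hba, cyc_a hxy, cyc_y hxy hay]
  rcases eq_or_ne z y with rfl | hzy
  · rw [cyc_y hxy hby, cyc_x hax hay, cyc_other hax hay (Ne.symm hba), cyc_a hxy]
  rcases eq_or_ne z a with rfl | hza
  · rw [cyc_other hax hay hab, cyc_a hxy, cyc_y hxy hby, cyc_x hax hay]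
  rcases eq_or_ne z b with rfl | hzb
  · rw [cyc_a hxy, cyc_y hxy hay, cyc_x hbx hby, cyc_other hbx hby hba]
  · rw [cyc_other hzx hzy hzb, cyc_other hzx hzy hza, cyc_other hzx hzy hzb,
      cyc_other hzx hzy hza]
end PermLemmas

section Psi
variable {G : Type*} [Group G]

private noncomputable def psi (g : G) (hg3 : g ^ 3 = 1) : Multiplicative (ZMod 3) →* G :=
  AddMonoidHom.toMultiplicativeLeft
    (ZMod.lift 3 ⟨zmultiplesHom (Additive G) (Additive.ofMul g), by
      show ((3:ℤ) • Additive.ofMul g) = 0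
      rw [← ofMul_zpow]
      have h3 : g ^ (3:ℤ) = 1 := by
        rw [show (3:ℤ) = ((3:ℕ):ℤ) from rfl, zpow_natCast, hg3]
      rw [h3, ofMul_one]⟩)

private lemma psi_int (g : G) (hg3 : g ^ 3 = 1) (i : ℤ) :
    psi g hg3 (Multiplicative.ofAdd ((i : ZMod 3))) = g ^ i := by
  unfold psi
  rw [AddMonoidHom.coe_toMultiplicativeLeft]
  simp only [Function.comp_apply]
  rw [show Multiplicative.toAdd (Multiplicative.ofAdd ((i : ZMod 3))) = ((i : ZMod 3)) from rfl,
    ZMod.lift_coe, zmultiplesHom_apply, ← ofMul_zpow]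
  rfl

private lemma psi_one (g : G) (hg3 : g ^ 3 = 1) :
    psi g hg3 (Multiplicative.ofAdd (1 : ZMod 3)) = g := by
  have := psi_int g hg3 1
  simpa using this

private lemma psi_inj (g : G) (hg3 : g ^ 3 = 1) (hg1 : g ≠ 1) (hg2 : g ^ 2 ≠ 1) :
    Function.Injective (psi g hg3) := by
  rw [injective_iff_map_eq_one]
  intro a ha
  have hcases : ∀ z : ZMod 3, z = 0 ∨ z = ((1:ℤ) : ZMod 3) ∨ z = ((2:ℤ) : ZMod 3) := by decide
  rcases hcases a.toAdd with h | h | h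
  · have : a = Multiplicative.ofAdd (0 : ZMod 3) := by
      rw [← h]; rfl
    simpa using this
  · exfalso
    have ha' : a = Multiplicative.ofAdd ((1:ℤ) : ZMod 3) := by rw [← h]; rfl
    rw [ha', psi_int] at ha
    exact hg1 (by simpa using ha)
  · exfalso
    have ha' : a = Multiplicative.ofAdd ((2:ℤ) : ZMod 3) := by rw [← h]; rfl
    rw [ha', psi_int] at ha
    exact hg2 (by rw [← zpow_natCast]; exact_mod_cast ha)
end Psi

/-- Part 1: failing weak compatibility. -/
private lemma part1 (α : Type u) [DecidableEq α] [Infinite α]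
    (lam : Cardinal.{u}) (hlam : ℵ₀ ≤ lam) (hlt : lam < #α) :
    ¬ WeakCompat (altGroup α) (Order.succ lam) := by
  intro hWC
  set μ : Cardinal.{u} := Order.succ lam with hμ
  obtain ⟨x, y, hxy⟩ := exists_pair_ne α
  -- an injection from the index type into α avoiding x and y
  have hcompl : #(↥({x, y} : Set α)ᶜ) = #α := by
    apply Cardinal.mk_compl_of_infinite
    exact lt_of_lt_of_le (Set.toFinite ({x, y} : Set α)).lt_aleph0 (Cardinal.aleph0_le_mk α)
  have hle : #(μ.ord.ToType) ≤ #(↥({x, y} : Set α)ᶜ) := by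
    rw [Cardinal.mk_ord_toType, hcompl]
    exact (Order.succ_le_of_lt hlt)
  obtain ⟨E⟩ := Cardinal.le_def _ _ |>.mp hle
  -- the distinct points
  set a : ∀ o (_ : o < μ.ord), α :=
    fun o ho => (E ((Ordinal.ToType.mk (o := μ.ord)) ⟨o, ho⟩) : α) with ha_def
  have ha_mem : ∀ o ho, a o ho ∉ ({x, y} : Set α) := fun o ho =>
    (E ((Ordinal.ToType.mk (o := μ.ord)) ⟨o, ho⟩)).2
  have hax : ∀ o ho, a o ho ≠ x := fun o ho h => ha_mem o ho (by rw [h]; left; rfl)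
  have hay : ∀ o ho, a o ho ≠ y := fun o ho h => ha_mem o ho (by rw [h]; right; rfl)
  have ha_inj : ∀ o ho o' ho', a o ho = a o' ho' → o = o' := by
    intro o ho o' ho' h
    have h2 := E.injective (Subtype.ext h)
    have h3 := (Ordinal.ToType.mk (o := μ.ord)).injective h2
    exact congrArg Subtype.val h3
  -- the 3-cycles
  set c : ∀ o (_ : o < μ.ord), Perm α := fun o ho => swap x y * swap x (a o ho) with hc_def
  have hc_mem : ∀ o ho, c o ho ∈ altGroup α := by
    intro o ho
    apply Subgroup.subset_closure
    exact ⟨swap x y, swap x (a o ho), ⟨x, y, hxy, rfl⟩,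
      ⟨x, a o ho, (hax o ho).symm, rfl⟩, rfl⟩
  set cA : ∀ o (_ : o < μ.ord), (altGroup α) := fun o ho => ⟨c o ho, hc_mem o ho⟩ with hcA_def
  have hcA3 : ∀ o ho, (cA o ho) ^ 3 = 1 := by
    intro o ho
    apply Subtype.ext
    push_cast
    exact cyc_pow_three hxy (hax o ho) (hay o ho)
  have hcA1 : ∀ o ho, (cA o ho) ≠ 1 := by
    intro o ho h
    exact cyc_ne_one hxy (hax o ho) (hay o ho) (congrArg Subtype.val h)
  have hcA2 : ∀ o ho, (cA o ho) ^ 2 ≠ 1 := by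
    intro o ho h
    apply cyc_sq_ne_one hxy (hax o ho) (hay o ho)
    have := congrArg Subtype.val h
    push_cast at this
    exact this
  -- the subgroups and isomorphisms
  set Fs : ∀ o (_ : o < μ.ord), Subgroup (altGroup α) :=
    fun o ho => (psi (cA o ho) (hcA3 o ho)).range with hFs_def
  set f : ∀ o ho, Multiplicative (ZMod 3) ≃* Fs o ho :=
    fun o ho => MonoidHom.ofInjective (psi_inj _ _ (hcA1 o ho) (hcA2 o ho)) with hf_def
  obtain ⟨i, j, hi, hj, hij, φ, h1, h2⟩ :=
    hWC (Multiplicative (ZMod 3)) inferInstance inferInstance Fs f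
  set g : Multiplicative (ZMod 3) := Multiplicative.ofAdd (1 : ZMod 3) with hg
  set u : ↥(Fs i hi ⊔ Fs j hj) := Subgroup.inclusion le_sup_left (f i hi g) with hu
  set v : ↥(Fs i hi ⊔ Fs j hj) := Subgroup.inclusion le_sup_right (f j hj g) with hv
  have hu_coe : (u : (altGroup α)) = cA i hi := by
    rw [hu, Subgroup.coe_inclusion, hf_def, MonoidHom.ofInjective_apply, psi_one]
  have hv_coe : (v : (altGroup α)) = cA j hj := by
    rw [hv, Subgroup.coe_inclusion, hf_def, MonoidHom.ofInjective_apply, psi_one]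
  have hsq : (u * v) ^ 2 = 1 := by
    apply Subtype.ext
    push_cast [hu_coe, hv_coe]
    apply Subtype.ext
    push_cast
    exact cyc_mul_sq hxy (hax i hi) (hay i hi) (hax j hj) (hay j hj)
      (fun h => hij.ne (ha_inj i hi j hj h))
  have hgg : (g * g) ^ 2 = 1 := by
    have key : φ ((u * v) ^ 2) = (g * g) ^ 2 := by
      rw [map_pow, map_mul, h1 g, h2 g]
    rw [hsq, map_one] at key
    exact key.symm
  rw [hg] at hgg
  exact absurd hgg (by decide)

/-- Every group satisfies the weak compatibility condition at some successor cardinal,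
by a pigeonhole argument. -/
private lemma exists_weakCompat (G : Type u) [Group G] :
    ∃ κ : Cardinal.{u}, ℵ₀ ≤ κ ∧ WeakCompat G (Order.succ κ) := by
  refine ⟨max ℵ₀ #((Set G) × (ℕ → G)), le_max_left _ _, ?_⟩
  set μ : Cardinal.{u} := Order.succ (max ℵ₀ #((Set G) × (ℕ → G))) with hμ
  intro F _ _ Fs f
  classical
  have : Countable F := Finite.to_countable
  obtain ⟨e, he⟩ := exists_injective_nat F
  -- a uniform construction of the desired pair from a collision
  have build : ∀ (i j : Ordinal.{u}) (hi : i < μ.ord) (hj : j < μ.ord), i < j →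
      Fs i hi = Fs j hj → (∀ x : F, ((f i hi x : G)) = ((f j hj x : G))) →
      ∃ (i' j' : Ordinal.{u}) (hi' : i' < μ.ord) (hj' : j' < μ.ord), i' < j' ∧
        ∃ φ : (Fs i' hi' ⊔ Fs j' hj' : Subgroup G) →* F,
          (∀ x, φ (Subgroup.inclusion le_sup_left (f i' hi' x)) = x) ∧
          (∀ x, φ (Subgroup.inclusion le_sup_right (f j' hj' x)) = x) := by
    intro i j hi hj hij hFs hfv
    refine ⟨i, j, hi, hj, hij, ?_⟩
    have hle : Fs i hi ⊔ Fs j hj ≤ Fs i hi := sup_le le_rfl (le_of_eq hFs.symm)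
    refine ⟨((f i hi).symm.toMonoidHom.comp (Subgroup.inclusion hle)), ?_, ?_⟩
    · intro x
      have harg : (Subgroup.inclusion hle (Subgroup.inclusion le_sup_left (f i hi x)))
          = f i hi x := by
        apply Subtype.ext; rw [Subgroup.coe_inclusion, Subgroup.coe_inclusion]
      rw [MonoidHom.comp_apply, harg]
      exact (f i hi).symm_apply_apply x
    · intro x
      have harg : (Subgroup.inclusion hle (Subgroup.inclusion le_sup_right (f j hj x)))
          = f i hi x := by
        apply Subtype.ext; rw [Subgroup.coe_inclusion, Subgroup.coe_inclusion, ← hfv x]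
      rw [MonoidHom.comp_apply, harg]
      exact (f i hi).symm_apply_apply x
  -- the encoding map for the pigeonhole argument
  set enc : μ.ord.ToType → (Set G) × (ℕ → G) := fun t =>
    ⟨((Fs ((Ordinal.ToType.mk (o := μ.ord)).symm t).1 ((Ordinal.ToType.mk (o := μ.ord)).symm t).2
        : Subgroup G) : Set G),
     fun n => if h : ∃ x : F, e x = n
       then ((f ((Ordinal.ToType.mk (o := μ.ord)).symm t).1
              ((Ordinal.ToType.mk (o := μ.ord)).symm t).2 h.choose : G))
       else 1⟩ with henc
  have hnotinj : ¬ Function.Injective enc := by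
    intro hinj
    have hcard : #(μ.ord.ToType) ≤ #((Set G) × (ℕ → G)) := Cardinal.mk_le_of_injective hinj
    rw [Cardinal.mk_ord_toType] at hcard
    exact absurd (hcard.trans (le_max_right _ _)) (not_le.mpr (Order.lt_succ _))
  obtain ⟨t₁, t₂, heq, hne⟩ := Function.not_injective_iff.mp hnotinj
  set o₁ := (Ordinal.ToType.mk (o := μ.ord)).symm t₁ with ho₁
  set o₂ := (Ordinal.ToType.mk (o := μ.ord)).symm t₂ with ho₂
  have hone : (o₁ : Ordinal) ≠ (o₂ : Ordinal) := by
    intro h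
    exact hne ((Ordinal.ToType.mk (o := μ.ord)).symm.injective (Subtype.ext h))
  have hFs_eq : Fs (o₁ : Ordinal) o₁.2 = Fs (o₂ : Ordinal) o₂.2 :=
    SetLike.coe_injective (congrArg Prod.fst heq)
  have hfv : ∀ x : F, ((f (o₁ : Ordinal) o₁.2 x : G)) = ((f (o₂ : Ordinal) o₂.2 x : G)) := by
    intro x
    have hx := congrFun (congrArg Prod.snd heq) (e x)
    have hx : (if h : ∃ x' : F, e x' = e x then ((f (o₁ : Ordinal) o₁.2 h.choose : G)) else 1)
        = (if h : ∃ x' : F, e x' = e x then ((f (o₂ : Ordinal) o₂.2 h.choose : G)) else 1) := hx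
    have hex : ∃ z : F, e z = e x := ⟨x, rfl⟩
    rw [dif_pos hex, dif_pos hex] at hx
    have hch : hex.choose = x := he hex.choose_spec
    rwa [hch] at hx
  rcases lt_or_gt_of_ne hone with h | h
  · exact build _ _ o₁.2 o₂.2 h hFs_eq hfv
  · exact build _ _ o₂.2 o₁.2 h hFs_eq.symm (fun x => (hfv x).symm)

/-- For any infinite cardinal `κ = #α` and any infinite cardinal `λ < κ`, the alternating
group `Alt(α)` does not satisfy the weak `λ⁺`-compatibility condition; hence
`cn (Alt(α)) ≥ #α`. -/
theorem alt_not_weakCompat (α : Type u) [DecidableEq α] [Infinite α] :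
    (∀ lam : Cardinal.{u}, ℵ₀ ≤ lam → lam < #α →
      ¬ WeakCompat (altGroup α) (Order.succ lam)) ∧
    #α ≤ cn (altGroup α) := by
  refine ⟨part1 α, ?_⟩
  obtain ⟨κ, hκ1, hκ2⟩ := exists_weakCompat (altGroup α)
  unfold cn
  refine le_csInf ⟨κ, ⟨hκ1, hκ2⟩⟩ ?_
  intro b hb
  by_contra hcon
  push_neg at hcon
  exact part1 α b hb.1 hcon hb.2
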